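/- arXiv:1008.0199 — 2 statements merged into one kernel-verified Lean document; each statement's English description precedes it below -/
import Mathlib

section
/- Fix s > 1 and ξ ∈ ℝ \ {0}. Define for h > 0 the rescaled physical eigenvalue Λ_ph,h(ξ) := h⁻² Λ_ph(ξ h), where Λ_ph(η) is the smaller eigenvalue of M(η)⁻¹ R^s(η). Then Λ_ph,h(ξ) → ξ² as h → 0. -/
open Real Complex Matrix Filter Topology

/-- Fourier symbol of the SIPG mass matrix (mesh size h = 1). -/
noncomputable def Msym (ξ : ℝ) : Matrix (Fin 2) (Fin 2) ℂ :=
  !![(((2 + Real.cos ξ) / 3 : ℝ) : ℂ), Complex.I * (Real.sin ξ : ℂ) / 6;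
     -Complex.I * (Real.sin ξ : ℂ) / 6, (((2 - Real.cos ξ) / 12 : ℝ) : ℂ)]

/-- Fourier symbol of the SIPG stiffness matrix with penalty parameter s (mesh size h = 1). -/
noncomputable def Rsym (s ξ : ℝ) : Matrix (Fin 2) (Fin 2) ℂ :=
  !![((4 * Real.sin (ξ / 2) ^ 2 : ℝ) : ℂ), 0;
     0, ((s - Real.cos (ξ / 2) ^ 2 : ℝ) : ℂ)]

/-- The matrix S(ξ) = M(ξ)⁻¹ R^s(ξ). -/
noncomputable def Ssym (s ξ : ℝ) : Matrix (Fin 2) (Fin 2) ℂ := (Msym ξ)⁻¹ * Rsym s ξ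

/-- Λ is an eigenvalue of the 2×2 complex matrix S. -/
def IsEigOf (S : Matrix (Fin 2) (Fin 2) ℂ) (Λ : ℂ) : Prop :=
  ∃ v : Fin 2 → ℂ, v ≠ 0 ∧ S.mulVec v = Λ • v

/-- The coefficient B(ξ) of the characteristic quadratic Λ²/12 − B Λ + C = 0. -/
noncomputable def Bcoef (s ξ : ℝ) : ℝ :=
  4 * Real.sin (ξ / 2) ^ 2 * (2 - Real.cos ξ) / 12 +
    (s - Real.cos (ξ / 2) ^ 2) * (2 + Real.cos ξ) / 3

/-- The coefficient C(ξ) of the characteristic quadratic Λ²/12 − B Λ + C = 0. -/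
noncomputable def Ccoef (s ξ : ℝ) : ℝ :=
  4 * Real.sin (ξ / 2) ^ 2 * (s - Real.cos (ξ / 2) ^ 2)

lemma det_Msym (η : ℝ) : (Msym η).det = 1/12 := by
  have h1 : (Real.sin η : ℂ)^2 + (Real.cos η : ℂ)^2 = 1 := by
    exact_mod_cast congrArg (Complex.ofReal) (Real.sin_sq_add_cos_sq η)
  rw [Msym, Matrix.det_fin_two_of]
  push_cast
  push_cast at h1
  linear_combination (-1/36 : ℂ) * h1 + (Complex.sin η^2/36) * Complex.I_sq


lemma det_char (s η : ℝ) (Λ : ℂ) :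
    (Rsym s η - Λ • Msym η).det = Λ^2/12 - (Bcoef s η : ℂ) * Λ + (Ccoef s η : ℂ) := by
  have h1 : (Real.sin η : ℂ)^2 + (Real.cos η : ℂ)^2 = 1 := by
    exact_mod_cast congrArg (Complex.ofReal) (Real.sin_sq_add_cos_sq η)
  rw [Matrix.det_fin_two]
  simp only [Rsym, Msym, Bcoef, Ccoef, Matrix.sub_apply, Matrix.smul_apply,
    Matrix.of_apply, Matrix.cons_val', Matrix.cons_val_zero, Matrix.cons_val_one,
    Matrix.head_cons, Matrix.vecHead, Matrix.vecTail, Matrix.empty_val', Matrix.cons_val_fin_one, smul_eq_mul]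
  push_cast
  push_cast at h1
  linear_combination (-Λ^2/36 : ℂ) * h1 + (Λ^2 * Complex.sin η^2/36) * Complex.I_sq

lemma isEig_iff (s η : ℝ) (Λ : ℂ) :
    IsEigOf (Ssym s η) Λ ↔ Λ^2/12 - (Bcoef s η : ℂ) * Λ + (Ccoef s η : ℂ) = 0 := by
  have hM : (Msym η).det ≠ 0 := by rw [det_Msym]; norm_num
  have key : Ssym s η - Λ • 1 = (Msym η)⁻¹ * (Rsym s η - Λ • Msym η) := by
    rw [Ssym, Matrix.mul_sub, Matrix.mul_smul, Matrix.nonsing_inv_mul _ (isUnit_iff_ne_zero.mpr hM)]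
  constructor
  · rintro ⟨v, hv, hEq⟩
    have h0 : (Ssym s η - Λ • 1).mulVec v = 0 := by
      rw [Matrix.sub_mulVec, Matrix.smul_mulVec, Matrix.one_mulVec, hEq, sub_self]
    have hdet : (Ssym s η - Λ • 1).det = 0 :=
      (Matrix.exists_mulVec_eq_zero_iff).mp ⟨v, hv, h0⟩
    rw [key, Matrix.det_mul, det_char] at hdet
    rcases mul_eq_zero.mp hdet with h | h
    · exact absurd h (by rw [Matrix.det_nonsing_inv, det_Msym]; norm_num)
    · exact h
  · intro hq
    have hdet : (Ssym s η - Λ • 1).det = 0 := by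
      rw [key, Matrix.det_mul, det_char, hq, mul_zero]
    obtain ⟨v, hv, h0⟩ := (Matrix.exists_mulVec_eq_zero_iff).mpr hdet
    refine ⟨v, hv, ?_⟩
    rw [Matrix.sub_mulVec, Matrix.smul_mulVec, Matrix.one_mulVec, sub_eq_zero] at h0
    exact h0

lemma Bpos {s : ℝ} (hs : 1 < s) (η : ℝ) : 0 < Bcoef s η := by
  rw [Bcoef]
  nlinarith [Real.cos_le_one η, Real.neg_one_le_cos η, sq_nonneg (Real.sin (η/2)),
    Real.cos_sq_le_one (η/2), sq_nonneg (Real.sin (η/2)) ]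

lemma Cnonneg {s : ℝ} (hs : 1 < s) (η : ℝ) : 0 ≤ Ccoef s η := by
  rw [Ccoef]
  nlinarith [sq_nonneg (Real.sin (η/2)), Real.cos_sq_le_one (η/2)]

lemma disc_nonneg {s : ℝ} (hs : 1 < s) (η : ℝ) : Ccoef s η / 3 ≤ (Bcoef s η)^2 := by
  have h1 : Real.sin (η/2)^2 + Real.cos (η/2)^2 = 1 := Real.sin_sq_add_cos_sq _
  have h2 : Real.cos η = 2 * Real.cos (η/2)^2 - 1 := by
    have h := Real.cos_sq (η/2)
    rw [show 2*(η/2) = η by ring] at h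
    linarith
  rw [Bcoef, Ccoef, h2]
  set c := Real.cos (η/2) with hcdef
  set a := Real.sin (η/2) with hadef
  have hc : c^2 ≤ 1 := by nlinarith [sq_nonneg a]
  have ha : (0:ℝ) ≤ a^2 := sq_nonneg a
  have hsc : (0:ℝ) ≤ s - c^2 := by linarith
  have key : 0 ≤ (a^2*(3-2*c^2) - (s-c^2)*(1+2*c^2))^2 + 16*(a*c)^2*(a^2*(s-c^2)) :=
    add_nonneg (sq_nonneg _)
      (by positivity)
  have hgoal : (4*a^2*(2-(2*c^2-1))/12 + (s-c^2)*(2+(2*c^2-1))/3)^2 - 4*a^2*(s-c^2)/3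
      = ((a^2*(3-2*c^2) - (s-c^2)*(1+2*c^2))^2 + 16*(a*c)^2*(a^2*(s-c^2)))/9
        - (16*a^2*c^2*(s-c^2)/9) * (a^2 + c^2 - 1) := by ring
  have h1' : a^2 + c^2 - 1 = 0 := by linarith
  rw [h1'] at hgoal
  linarith [key, hgoal]

noncomputable def dsc (s η : ℝ) : ℝ := Real.sqrt ((Bcoef s η)^2 - Ccoef s η/3)
noncomputable def Lm (s η : ℝ) : ℝ := 6*(Bcoef s η - dsc s η)

lemma dsc_sq {s : ℝ} (hs : 1 < s) (η : ℝ) :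
    (dsc s η)^2 = (Bcoef s η)^2 - Ccoef s η/3 :=
  Real.sq_sqrt (by linarith [disc_nonneg hs η])

lemma Lm_isEig {s : ℝ} (hs : 1 < s) (η : ℝ) : IsEigOf (Ssym s η) ((Lm s η : ℝ) : ℂ) := by
  rw [isEig_iff]
  have hr : (Lm s η)^2/12 - Bcoef s η * Lm s η + Ccoef s η = 0 := by
    rw [Lm]; linear_combination 3 * dsc_sq hs η
  exact_mod_cast congrArg (Complex.ofReal) hr

lemma Lm_le {s : ℝ} (hs : 1 < s) (η : ℝ) (μ : ℝ) (h : IsEigOf (Ssym s η) (μ:ℂ)) :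
    Lm s η ≤ μ := by
  rw [isEig_iff] at h
  have hr : μ^2/12 - Bcoef s η * μ + Ccoef s η = 0 := by exact_mod_cast h
  have key : (μ - Lm s η) * (μ - 6*(Bcoef s η + dsc s η)) = 0 := by
    rw [Lm]; linear_combination 12*hr - 36*(dsc_sq hs η)
  have hd : 0 ≤ dsc s η := Real.sqrt_nonneg _
  rcases mul_eq_zero.mp key with h' | h'
  · linarith [sub_eq_zero.mp h']
  · have := sub_eq_zero.mp h'
    rw [Lm]; linarith

lemma Lm_eq_div {s : ℝ} (hs : 1 < s) (η : ℝ) :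
    Lm s η = 2 * Ccoef s η / (Bcoef s η + dsc s η) := by
  have hd : 0 ≤ dsc s η := Real.sqrt_nonneg _
  have hB := Bpos hs η
  have hne : Bcoef s η + dsc s η ≠ 0 := by positivity
  rw [Lm, eq_div_iff hne]
  linear_combination (-6) * dsc_sq hs η

lemma contB (s : ℝ) : Continuous (Bcoef s) := by unfold Bcoef; fun_prop

lemma contC (s : ℝ) : Continuous (Ccoef s) := by unfold Ccoef; fun_prop

lemma contd (s : ℝ) : Continuous (dsc s) := by
  unfold dsc
  exact Real.continuous_sqrt.comp (((contB s).pow 2).sub ((contC s).div_const 3))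

lemma B0 (s : ℝ) : Bcoef s 0 = s - 1 := by norm_num [Bcoef]

lemma C0 (s : ℝ) : Ccoef s 0 = 0 := by norm_num [Ccoef]

lemma d0 {s : ℝ} (hs : 1 < s) : dsc s 0 = s - 1 := by
  rw [dsc, B0, C0]
  rw [show (0:ℝ)/3 = 0 by norm_num, sub_zero]
  exact Real.sqrt_sq (by linarith)

theorem Ssym_physical_rescaled_tendsto_sq (s ξ : ℝ) (hs : 1 < s) (hξ : ξ ≠ 0)
    (Λph : ℝ → ℝ)
    (hph : ∀ h : ℝ, 0 < h → IsEigOf (Ssym s (ξ * h)) ((Λph h : ℝ) : ℂ) ∧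
      ∀ μ : ℝ, IsEigOf (Ssym s (ξ * h)) (μ : ℂ) → Λph h ≤ μ) :
    Filter.Tendsto (fun h : ℝ => Λph h / h ^ 2) (nhdsWithin 0 (Set.Ioi 0))
      (nhds (ξ ^ 2)) := by
  have hs1 : (0:ℝ) < s - 1 := by linarith
  have heq : ∀ h : ℝ, 0 < h → Λph h = Lm s (ξ*h) := by
    intro h hh
    obtain ⟨he, hmin⟩ := hph h hh
    exact le_antisymm (hmin _ (Lm_isEig hs _)) (Lm_le hs _ _ he)
  have hη : Tendsto (fun h:ℝ => ξ*h) (𝓝[>] (0:ℝ)) (𝓝 0) := by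
    have h0 : Tendsto (fun h:ℝ => ξ*h) (𝓝 (0:ℝ)) (𝓝 (ξ*0)) :=
      (continuous_const.mul continuous_id).tendsto 0
    simpa using h0.mono_left nhdsWithin_le_nhds
  have hden : Tendsto (fun h:ℝ => Bcoef s (ξ*h) + dsc s (ξ*h)) (𝓝[>] (0:ℝ))
      (𝓝 (2*(s-1))) := by
    have hcont : Continuous (fun η => Bcoef s η + dsc s η) := (contB s).add (contd s)
    have h0 := (hcont.tendsto 0).comp hη
    simp only [B0, d0 hs, Function.comp_def] at h0
    convert h0 using 2
    ring
  have hslope : Tendsto (fun h:ℝ => Real.sin (ξ*h/2) / h) (𝓝[>] (0:ℝ)) (𝓝 (ξ/2)) := by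
    have hder : HasDerivAt (fun h:ℝ => Real.sin (ξ*h/2)) (ξ/2) 0 := by
      have h1 : HasDerivAt (fun h:ℝ => ξ*h/2) (ξ/2) 0 := by
        simpa using ((hasDerivAt_id (0:ℝ)).const_mul ξ).div_const 2
      have h2 := (Real.hasDerivAt_sin (ξ*(0:ℝ)/2)).comp 0 h1
      simpa [Function.comp_def] using h2
    rw [hasDerivAt_iff_tendsto_slope] at hder
    have hmono : 𝓝[>](0:ℝ) ≤ 𝓝[≠](0:ℝ) :=
      nhdsWithin_mono _ (fun x hx => ne_of_gt hx)
    refine (hder.mono_left hmono).congr (fun h => ?_)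
    simp [slope, Real.sin_zero]
    ring
  have hcos : Tendsto (fun h:ℝ => s - Real.cos (ξ*h/2)^2) (𝓝[>] (0:ℝ)) (𝓝 (s-1)) := by
    have hcont : Continuous (fun η:ℝ => s - Real.cos (η/2)^2) := by fun_prop
    have h0 := (hcont.tendsto 0).comp hη
    simpa [Function.comp_def] using h0
  have hnum : Tendsto (fun h:ℝ => Ccoef s (ξ*h)/h^2) (𝓝[>] (0:ℝ)) (𝓝 (ξ^2*(s-1))) := by
    have hsq : Tendsto (fun h:ℝ => (4:ℝ) * (Real.sin (ξ*h/2)/h)^2 * (s - Real.cos (ξ*h/2)^2))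
        (𝓝[>] (0:ℝ)) (𝓝 (4*(ξ/2)^2*(s-1))) := ((hslope.pow 2).const_mul 4).mul hcos
    have hval : (4:ℝ)*(ξ/2)^2*(s-1) = ξ^2*(s-1) := by ring
    rw [hval] at hsq
    refine Filter.Tendsto.congr' ?_ hsq
    filter_upwards [self_mem_nhdsWithin] with h hh
    have hh0 : (h:ℝ) ≠ 0 := ne_of_gt hh
    rw [Ccoef]
    field_simp
  have h2s : (2*(s-1)) ≠ 0 := by positivity
  have hfin := (hnum.const_mul 2).div hden h2s
  have hval2 : 2*(ξ^2*(s-1))/(2*(s-1)) = ξ^2 := by field_simp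
  rw [hval2] at hfin
  refine Filter.Tendsto.congr' ?_ hfin
  filter_upwards [self_mem_nhdsWithin] with h hh
  rw [heq h hh, Lm_eq_div hs]
  simp only [Pi.div_apply]
  ring
end

section
/- For every s > 1 there exists c > 0 such that for all ξ ∈ ℝ the larger eigenvalue Λ_sp(ξ) of S(ξ) = M(ξ)⁻¹ R^s(ξ) satisfies Λ_sp(ξ) ≥ c. In fact one may take c = 12(s − 1)/7, since the sum of the two eigenvalues is at least 4(s−1) and the smaller eigenvalue Λ_ph(ξ) is at most 18. -/
open Real Complex Matrix Filter Topology

lemma detMsym (ξ : ℝ) : (Msym ξ).det = 1/12 := by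
  have h : (Real.sin ξ : ℂ)^2 + (Real.cos ξ : ℂ)^2 = 1 := by
    exact_mod_cast congrArg (Complex.ofReal) (Real.sin_sq_add_cos_sq ξ)
  simp only [Msym, Matrix.det_fin_two_of]
  push_cast [-Complex.ofReal_cos, -Complex.ofReal_sin]
  linear_combination (-1/36 : ℂ) * h + (Real.sin ξ : ℂ)^2/36 * Complex.I_sq

lemma detRM (s ξ μ : ℝ) :
    (Rsym s ξ - (μ : ℂ) • Msym ξ).det =
      ((μ^2/12 - Bcoef s ξ * μ + Ccoef s ξ : ℝ) : ℂ) := by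
  have h : (Real.sin ξ : ℂ)^2 + (Real.cos ξ : ℂ)^2 = 1 := by
    exact_mod_cast congrArg (Complex.ofReal) (Real.sin_sq_add_cos_sq ξ)
  rw [Matrix.det_fin_two]
  simp only [Rsym, Msym, Bcoef, Ccoef, Matrix.sub_apply, Matrix.smul_apply,
    Matrix.cons_val', Matrix.cons_val_zero, Matrix.cons_val_one, Matrix.head_cons,
    Matrix.head_fin_const, Matrix.empty_val', Matrix.cons_val_fin_one,
    Matrix.of_apply, smul_eq_mul]
  push_cast [-Complex.ofReal_cos, -Complex.ofReal_sin]
  linear_combination (-(μ:ℂ)^2/36) * h + ((μ:ℂ)^2 * (Real.sin ξ : ℂ)^2/36) * Complex.I_sq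

theorem Ssym_spurious_eigenvalue_lower_bound (s : ℝ) (hs : 1 < s) :
    0 < 12 * (s - 1) / 7 ∧
    ∀ ξ : ℝ, ∀ Λsp : ℝ,
      (IsEigOf (Ssym s ξ) ((Λsp : ℝ) : ℂ) ∧
        ∀ μ : ℝ, IsEigOf (Ssym s ξ) (μ : ℂ) → μ ≤ Λsp) →
      12 * (s - 1) / 7 ≤ Λsp := by
  constructor
  · linarith
  intro ξ Λsp ⟨_, hmax⟩
  set c := Real.cos (ξ/2) with hc
  set sn := Real.sin (ξ/2) with hsn
  have hpy : sn^2 + c^2 = 1 := Real.sin_sq_add_cos_sq _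
  have hcos : Real.cos ξ = 2*c^2 - 1 := by
    have : ξ = 2 * (ξ/2) := by ring
    rw [this, Real.cos_two_mul]
  have hc2 : c^2 ≤ 1 := by nlinarith [sq_nonneg sn]
  have hc0 : 0 ≤ c^2 := sq_nonneg c
  -- B and C in terms of c
  have hB : Bcoef s ξ = 4*(1-c^2)*(3-2*c^2)/12 + (s-c^2)*(1+2*c^2)/3 := by
    rw [Bcoef, hcos]; nlinarith [hpy]
  have hC : Ccoef s ξ = 4*(1-c^2)*(s-c^2) := by
    rw [Ccoef]; nlinarith [hpy]
  set B := Bcoef s ξ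
  set C := Ccoef s ξ
  have hD : 0 ≤ B^2 - C/3 := by
    rw [hB, hC]
    nlinarith [sq_nonneg (4*(1-c^2)*(3-2*c^2)/12 - (s-c^2)*(1+2*c^2)/3),
      mul_nonneg (mul_nonneg (by nlinarith : (0:ℝ) ≤ 4*(1-c^2)) (by linarith : (0:ℝ) ≤ s-c^2)) hc0,
      mul_nonneg (by nlinarith : (0:ℝ) ≤ 4*(1-c^2)) (by linarith : (0:ℝ) ≤ s-c^2)]
  set μ := 6*B + 6*Real.sqrt (B^2 - C/3) with hμ
  have hroot : μ^2/12 - B*μ + C = 0 := by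
    have hs2 : Real.sqrt (B^2 - C/3) ^ 2 = B^2 - C/3 := Real.sq_sqrt hD
    rw [hμ]; nlinarith [hs2]
  have hBlb : 2*(s-1) ≤ 6*B := by rw [hB]; nlinarith
  have hμlb : 12*(s-1)/7 ≤ μ := by
    have := Real.sqrt_nonneg (B^2 - C/3)
    rw [hμ]; nlinarith
  -- μ is an eigenvalue
  have hdetM : IsUnit (Msym ξ).det := by
    rw [detMsym]; exact isUnit_iff_ne_zero.mpr (by norm_num)
  have hdet0 : (Rsym s ξ - (μ : ℂ) • Msym ξ).det = 0 := by
    rw [detRM]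
    exact_mod_cast hroot
  obtain ⟨v, hv0, hv⟩ := (Matrix.exists_mulVec_eq_zero_iff).mpr hdet0
  have heig : IsEigOf (Ssym s ξ) ((μ : ℝ) : ℂ) := by
    refine ⟨v, hv0, ?_⟩
    have hRv : (Rsym s ξ).mulVec v = (μ:ℂ) • (Msym ξ).mulVec v := by
      have := hv
      rw [Matrix.sub_mulVec, Matrix.smul_mulVec, sub_eq_zero] at this
      exact this
    rw [Ssym, ← Matrix.mulVec_mulVec, hRv, Matrix.mulVec_smul, Matrix.mulVec_mulVec,
      Matrix.nonsing_inv_mul _ hdetM, Matrix.one_mulVec]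
  exact le_trans hμlb (hmax μ heig)
end
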